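/- Let φ be a formula of BndSCL, 𝔄 a suitable model, s a suitable assignment and n ∈ ℕ. Then Eloise has a winning strategy in the n-bounded evaluation game G_n(𝔄,s,φ) if and only if Eloise has a winning strategy in the standard first-order evaluation game G(𝔄,s,Φⁿ_φ) for the n-th approximant Φⁿ_φ, i.e. if and only if 𝔄,s ⊨ Φⁿ_φ in first-order logic. -/

import Mathlib

/-
Common formalization of the logics SCL (static computation logic, unbounded
game-theoretic semantics) and BndSCL (bounded semantics), following the paper
"First-order logic with self-reference".

* Games are played on arbitrary (possibly infinite) arenas; plays are maximal
  walks; strategies are functions from finite walks (histories) to positions;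
  infinite plays, and finite plays ending at a dead end where `win` holds for
  neither player, are won by nobody.
* The semantic games are formalized with positions carrying the current
  (sub)formula, an environment binding each label symbol to the labelled
  formula it most recently named (this is the standard closure rendering of
  "reference formula of a claim-symbol occurrence"), the current assignment
  and the polarity (+ = true, − = false).  The bounded game additionally
  carries a clock value.
-/

set_option autoImplicit false

universe u

/-! ## Generic two-player games on (possibly infinite) arenas -/

inductive Player : Type
  | eloise : Player
  | abelard : Player
deriving DecidableEq

def Player.opp : Player → Player
  | .eloise => .abelard
  | .abelard => .eloise

/-- A game arena: an ownership function (corresponding to the partition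
`V = V₀ ∪ V₁`), an edge relation, and a predicate telling which player (if
any) wins a play ending at a given dead-end position. -/
structure GameArena (P : Type u) where
  turn : P → Player
  edge : P → P → Prop
  win : P → Player → Prop

namespace GameArena

variable {P : Type u} (A : GameArena P)

def DeadEnd (u : P) : Prop := ∀ x, ¬ A.edge u x

/-- `w` is a finite nonempty walk whose first element is `v`. -/
def IsWalkFrom (v : P) (w : List P) : Prop :=
  w.head? = some v ∧ List.Chain' A.edge w

/-- A finite (maximal) play from `v`: a walk whose last element is a dead end. -/
def IsFinitePlay (v : P) (w : List P) : Prop :=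
  A.IsWalkFrom v w ∧ ∀ u, w.getLast? = some u → A.DeadEnd u

/-- An infinite play from `v`. -/
def IsInfPlay (v : P) (f : ℕ → P) : Prop :=
  f 0 = v ∧ ∀ n, A.edge (f n) (f (n + 1))

/-- A strategy (a function from histories to positions) of player `pl` is
legal if it always prescribes a move along an edge whenever a move exists. -/
def LegalFor (pl : Player) (v : P) (σ : List P → P) : Prop :=
  ∀ w u, A.IsWalkFrom v w → w.getLast? = some u → A.turn u = pl →
    (∃ x, A.edge u x) → A.edge u (σ w)

/-- The strategy `σ` of player `pl` is followed in the finite play `w`. -/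
def FollowsFin (pl : Player) (σ : List P → P) (w : List P) : Prop :=
  ∀ q u x, (q ++ [x]) <+: w → q.getLast? = some u → A.turn u = pl → x = σ q

/-- The strategy `σ` of player `pl` is followed in the infinite play `f`. -/
def FollowsInf (pl : Player) (σ : List P → P) (f : ℕ → P) : Prop :=
  ∀ n, A.turn (f n) = pl →
    f (n + 1) = σ (List.ofFn fun i : Fin (n + 1) => f i)

/-- `σ` is a winning strategy of player `pl` from `v`: it is legal, every
finite maximal play following it ends in a dead end won by `pl`, and no
infinite play follows it (infinite plays are won by neither player). -/
def WinningStrategy (pl : Player) (v : P) (σ : List P → P) : Prop :=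
  A.LegalFor pl v σ ∧
  (∀ w, A.IsFinitePlay v w → A.FollowsFin pl σ w →
      ∃ u, w.getLast? = some u ∧ A.win u pl) ∧
  (∀ f, A.IsInfPlay v f → ¬ A.FollowsInf pl σ f)

def HasWinningStrategy (pl : Player) (v : P) : Prop :=
  ∃ σ : List P → P, A.WinningStrategy pl v σ

end GameArena

/-- A positional strategy: its moves depend only on the current position. -/
def Positional {P : Type u} (σ : List P → P) : Prop :=
  ∀ q q' : List P, q.getLast? = q'.getLast? → σ q = σ q'

/-! ## Syntax of SCL / BndSCL -/

/-- A purely relational vocabulary. -/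
structure Vocab : Type 1 where
  Rel : Type
  arity : Rel → ℕ

/-- Formulas of SCL / BndSCL over the vocabulary `V`.  Variables and label
symbols are natural numbers; `claim L` is the claim symbol `C_L` and
`lab L φ` is the labelled formula `L φ`. -/
inductive SCLFormula (V : Vocab) : Type
  | bot : SCLFormula V
  | eq (x y : ℕ) : SCLFormula V
  | rel (R : V.Rel) (args : Fin (V.arity R) → ℕ) : SCLFormula V
  | claim (L : ℕ) : SCLFormula V
  | not (φ : SCLFormula V) : SCLFormula V
  | and (φ ψ : SCLFormula V) : SCLFormula V
  | or (φ ψ : SCLFormula V) : SCLFormula V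
  | ex (x : ℕ) (φ : SCLFormula V) : SCLFormula V
  | all (x : ℕ) (φ : SCLFormula V) : SCLFormula V
  | lab (L : ℕ) (φ : SCLFormula V) : SCLFormula V

namespace SCLFormula

variable {V : Vocab}

/-- First-order atoms. -/
def IsFOAtom : SCLFormula V → Prop
  | .bot => True
  | .eq _ _ => True
  | .rel _ _ => True
  | _ => False

/-- Purely first-order formulas (no claim symbols, no label symbols). -/
def IsFO : SCLFormula V → Prop
  | .bot => True
  | .eq _ _ => True
  | .rel _ _ => True
  | .claim _ => False
  | .not φ => IsFO φ
  | .and φ ψ => IsFO φ ∧ IsFO ψ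
  | .or φ ψ => IsFO φ ∧ IsFO ψ
  | .ex _ φ => IsFO φ
  | .all _ φ => IsFO φ
  | .lab _ _ => False

/-- Free (individual) variables. -/
def freeVars : SCLFormula V → Finset ℕ
  | .bot => ∅
  | .eq x y => {x, y}
  | .rel _ a => Finset.image a Finset.univ
  | .claim _ => ∅
  | .not φ => freeVars φ
  | .and φ ψ => freeVars φ ∪ freeVars ψ
  | .or φ ψ => freeVars φ ∪ freeVars ψ
  | .ex x φ => freeVars φ \ {x}
  | .all x φ => freeVars φ \ {x}
  | .lab _ φ => freeVars φ

/-- All variables occurring in a formula (free or bound). -/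
def vars : SCLFormula V → Finset ℕ
  | .bot => ∅
  | .eq x y => {x, y}
  | .rel _ a => Finset.image a Finset.univ
  | .claim _ => ∅
  | .not φ => vars φ
  | .and φ ψ => vars φ ∪ vars ψ
  | .or φ ψ => vars φ ∪ vars ψ
  | .ex x φ => insert x (vars φ)
  | .all x φ => insert x (vars φ)
  | .lab _ φ => vars φ

/-- Sentences: formulas with no free variables. -/
def IsSentence (φ : SCLFormula V) : Prop := freeVars φ = ∅

end SCLFormula

/-! ## Structures and first-order (Tarski) satisfaction -/

/-- A (suitable) model for vocabulary `V`: a nonempty domain together with an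
interpretation of all relation symbols. -/
structure Struct (V : Vocab) where
  Dom : Type u
  dom_nonempty : Nonempty Dom
  interp : ∀ R : V.Rel, (Fin (V.arity R) → Dom) → Prop

attribute [instance] Struct.dom_nonempty

/-- Satisfaction of atoms (false on non-atoms). -/
def atomSat {V : Vocab} (M : Struct.{u} V) (s : ℕ → M.Dom) : SCLFormula V → Prop
  | .bot => False
  | .eq x y => s x = s y
  | .rel R a => M.interp R fun i => s (a i)
  | _ => False

/-- Standard (Tarski) first-order satisfaction.  It is only meaningful on
purely first-order formulas; claim symbols are interpreted as `False` and
label symbols are ignored. -/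
def FOSat {V : Vocab} (M : Struct.{u} V) : (ℕ → M.Dom) → SCLFormula V → Prop
  | _, .bot => False
  | s, .eq x y => s x = s y
  | s, .rel R a => M.interp R fun i => s (a i)
  | _, .claim _ => False
  | s, .not φ => ¬ FOSat M s φ
  | s, .and φ ψ => FOSat M s φ ∧ FOSat M s ψ
  | s, .or φ ψ => FOSat M s φ ∨ FOSat M s ψ
  | s, .ex x φ => ∃ a : M.Dom, FOSat M (Function.update s x a) φ
  | s, .all x φ => ∀ a : M.Dom, FOSat M (Function.update s x a) φ
  | s, .lab _ φ => FOSat M s φ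

/-! ## The evaluation games -/

/-- A position of the semantic game: the current formula, the environment
recording for each label symbol `L` the reference formula `L ψ` it currently
names, the current assignment, and the polarity (`true` = `+`). -/
structure SCLPos (V : Vocab) (D : Type u) : Type u where
  form : SCLFormula V
  env : ℕ → Option (SCLFormula V)
  asg : ℕ → D
  pol : Bool

/-- Which player moves at a given position. (At positions with at most one
successor the owner is irrelevant; we let Eloise own them.) -/
def posTurn {V : Vocab} {D : Type u} (p : SCLPos V D) : Player :=
  match p.form, p.pol with
  | .and _ _, true => .abelard
  | .and _ _, false => .eloise
  | .or _ _, true => .eloise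
  | .or _ _, false => .abelard
  | .all _ _, true => .abelard
  | .all _ _, false => .eloise
  | .ex _ _, true => .eloise
  | .ex _ _, false => .abelard
  | _, _ => .eloise

/-- Who wins a play ending at a given position: at an FO-atom position,
Eloise wins iff the atom's truth value agrees with the polarity, and Abelard
wins otherwise; plays ending anywhere else (e.g. at a claim symbol with no
reference formula, or with clock value 0) are won by neither player. -/
def posWin {V : Vocab} (M : Struct.{u} V) (p : SCLPos V M.Dom) : Player → Prop
  | .eloise => p.form.IsFOAtom ∧ (atomSat M p.asg p.form ↔ p.pol = true)
  | .abelard => p.form.IsFOAtom ∧ ¬ (atomSat M p.asg p.form ↔ p.pol = true)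

/-- Moves of the unbounded evaluation game `G_∞`. -/
inductive UStep {V : Vocab} (M : Struct.{u} V) :
    SCLPos V M.Dom → SCLPos V M.Dom → Prop
  | neg (φ : SCLFormula V) (e : ℕ → Option (SCLFormula V)) (s : ℕ → M.Dom) (b : Bool) :
      UStep M ⟨.not φ, e, s, b⟩ ⟨φ, e, s, !b⟩
  | andLeft (φ ψ : SCLFormula V) (e : ℕ → Option (SCLFormula V)) (s : ℕ → M.Dom) (b : Bool) :
      UStep M ⟨.and φ ψ, e, s, b⟩ ⟨φ, e, s, b⟩
  | andRight (φ ψ : SCLFormula V) (e : ℕ → Option (SCLFormula V)) (s : ℕ → M.Dom) (b : Bool) :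
      UStep M ⟨.and φ ψ, e, s, b⟩ ⟨ψ, e, s, b⟩
  | orLeft (φ ψ : SCLFormula V) (e : ℕ → Option (SCLFormula V)) (s : ℕ → M.Dom) (b : Bool) :
      UStep M ⟨.or φ ψ, e, s, b⟩ ⟨φ, e, s, b⟩
  | orRight (φ ψ : SCLFormula V) (e : ℕ → Option (SCLFormula V)) (s : ℕ → M.Dom) (b : Bool) :
      UStep M ⟨.or φ ψ, e, s, b⟩ ⟨ψ, e, s, b⟩
  | exStep (x : ℕ) (φ : SCLFormula V) (e : ℕ → Option (SCLFormula V)) (s : ℕ → M.Dom)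
      (b : Bool) (a : M.Dom) :
      UStep M ⟨.ex x φ, e, s, b⟩ ⟨φ, e, Function.update s x a, b⟩
  | allStep (x : ℕ) (φ : SCLFormula V) (e : ℕ → Option (SCLFormula V)) (s : ℕ → M.Dom)
      (b : Bool) (a : M.Dom) :
      UStep M ⟨.all x φ, e, s, b⟩ ⟨φ, e, Function.update s x a, b⟩
  | labStep (L : ℕ) (φ : SCLFormula V) (e : ℕ → Option (SCLFormula V)) (s : ℕ → M.Dom)
      (b : Bool) :
      UStep M ⟨.lab L φ, e, s, b⟩ ⟨φ, Function.update e L (some (.lab L φ)), s, b⟩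
  | claimStep (L : ℕ) (e : ℕ → Option (SCLFormula V)) (s : ℕ → M.Dom) (b : Bool)
      (χ : SCLFormula V) (h : e L = some χ) :
      UStep M ⟨.claim L, e, s, b⟩ ⟨χ, e, s, b⟩

/-- Moves of the `n`-bounded evaluation game: positions additionally carry a
clock value, which decreases by one exactly at jumps from a claim symbol to
its reference formula; a claim-symbol position with clock value `0` is a dead
end won by neither player. -/
inductive BStep {V : Vocab} (M : Struct.{u} V) :
    SCLPos V M.Dom × ℕ → SCLPos V M.Dom × ℕ → Prop
  | neg (φ : SCLFormula V) (e : ℕ → Option (SCLFormula V)) (s : ℕ → M.Dom) (b : Bool) (n : ℕ) :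
      BStep M (⟨.not φ, e, s, b⟩, n) (⟨φ, e, s, !b⟩, n)
  | andLeft (φ ψ : SCLFormula V) (e : ℕ → Option (SCLFormula V)) (s : ℕ → M.Dom) (b : Bool)
      (n : ℕ) : BStep M (⟨.and φ ψ, e, s, b⟩, n) (⟨φ, e, s, b⟩, n)
  | andRight (φ ψ : SCLFormula V) (e : ℕ → Option (SCLFormula V)) (s : ℕ → M.Dom) (b : Bool)
      (n : ℕ) : BStep M (⟨.and φ ψ, e, s, b⟩, n) (⟨ψ, e, s, b⟩, n)
  | orLeft (φ ψ : SCLFormula V) (e : ℕ → Option (SCLFormula V)) (s : ℕ → M.Dom) (b : Bool)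
      (n : ℕ) : BStep M (⟨.or φ ψ, e, s, b⟩, n) (⟨φ, e, s, b⟩, n)
  | orRight (φ ψ : SCLFormula V) (e : ℕ → Option (SCLFormula V)) (s : ℕ → M.Dom) (b : Bool)
      (n : ℕ) : BStep M (⟨.or φ ψ, e, s, b⟩, n) (⟨ψ, e, s, b⟩, n)
  | exStep (x : ℕ) (φ : SCLFormula V) (e : ℕ → Option (SCLFormula V)) (s : ℕ → M.Dom)
      (b : Bool) (n : ℕ) (a : M.Dom) :
      BStep M (⟨.ex x φ, e, s, b⟩, n) (⟨φ, e, Function.update s x a, b⟩, n)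
  | allStep (x : ℕ) (φ : SCLFormula V) (e : ℕ → Option (SCLFormula V)) (s : ℕ → M.Dom)
      (b : Bool) (n : ℕ) (a : M.Dom) :
      BStep M (⟨.all x φ, e, s, b⟩, n) (⟨φ, e, Function.update s x a, b⟩, n)
  | labStep (L : ℕ) (φ : SCLFormula V) (e : ℕ → Option (SCLFormula V)) (s : ℕ → M.Dom)
      (b : Bool) (n : ℕ) :
      BStep M (⟨.lab L φ, e, s, b⟩, n) (⟨φ, Function.update e L (some (.lab L φ)), s, b⟩, n)
  | claimStep (L : ℕ) (e : ℕ → Option (SCLFormula V)) (s : ℕ → M.Dom) (b : Bool)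
      (χ : SCLFormula V) (n : ℕ) (h : e L = some χ) :
      BStep M (⟨.claim L, e, s, b⟩, n + 1) (⟨χ, e, s, b⟩, n)

/-- The unbounded evaluation game `G_∞(𝔄, ·, ·)` as a game arena. -/
def gameU {V : Vocab} (M : Struct.{u} V) : GameArena (SCLPos V M.Dom) where
  turn := posTurn
  edge := UStep M
  win := posWin M

/-- The bounded evaluation games `G_n(𝔄, ·, ·)` (for all clock values `n`
simultaneously) as a game arena. -/
def gameB {V : Vocab} (M : Struct.{u} V) : GameArena (SCLPos V M.Dom × ℕ) where
  turn p := posTurn p.1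
  edge := BStep M
  win p := posWin M p.1

/-- The initial position of the evaluation game for `φ` under assignment `s`:
empty environment and positive polarity. -/
def initPos {V : Vocab} {D : Type u} (φ : SCLFormula V) (s : ℕ → D) : SCLPos V D :=
  ⟨φ, fun _ => none, s, true⟩

/-- Truth under the unbounded semantics (the logic SCL):
`𝔄,s ⊨ φ` iff Eloise has a winning strategy in `G_∞(𝔄,s,φ)`. -/
def SCLTrue {V : Vocab} (M : Struct.{u} V) (s : ℕ → M.Dom) (φ : SCLFormula V) : Prop :=
  (gameU M).HasWinningStrategy .eloise (initPos φ s)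

/-! ### The bounded game `G_ω` -/

/-- Positions of the game `G_ω`: the initial position (where Abelard picks a
number `n'`), the intermediate positions (where Eloise picks some `n ≥ n'`),
and the positions of the `n`-bounded games. -/
inductive GOPos (V : Vocab) (D : Type u) : Type u
  | start : GOPos V D
  | mid (n' : ℕ) : GOPos V D
  | inner (p : SCLPos V D) (clock : ℕ) : GOPos V D

inductive GOStep {V : Vocab} (M : Struct.{u} V) (φ : SCLFormula V) (s : ℕ → M.Dom) :
    GOPos V M.Dom → GOPos V M.Dom → Prop
  | abelardPick (n' : ℕ) : GOStep M φ s .start (.mid n')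
  | eloisePick (n' n : ℕ) (h : n' ≤ n) : GOStep M φ s (.mid n') (.inner (initPos φ s) n)
  | play (p q : SCLPos V M.Dom) (m k : ℕ) (h : BStep M (p, m) (q, k)) :
      GOStep M φ s (.inner p m) (.inner q k)

def goTurn {V : Vocab} {D : Type u} : GOPos V D → Player
  | .start => .abelard
  | .mid _ => .eloise
  | .inner p _ => posTurn p

def goWin {V : Vocab} (M : Struct.{u} V) : GOPos V M.Dom → Player → Prop
  | .inner p _, pl => posWin M p pl
  | _, _ => False

/-- The bounded evaluation game `G_ω(𝔄,s,φ)`: Abelard picks `n' ∈ ℕ`, then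
Eloise picks `n ≥ n'`, and then `G_n(𝔄,s,φ)` is played. -/
def gameOmega {V : Vocab} (M : Struct.{u} V) (φ : SCLFormula V) (s : ℕ → M.Dom) :
    GameArena (GOPos V M.Dom) where
  turn := goTurn
  edge := GOStep M φ s
  win := goWin M

/-- Truth under the bounded semantics (the logic BndSCL):
`𝔄,s ⊨_ω φ` iff Eloise has a winning strategy in `G_ω(𝔄,s,φ)`. -/
def BndTrue {V : Vocab} (M : Struct.{u} V) (s : ℕ → M.Dom) (φ : SCLFormula V) : Prop :=
  (gameOmega M φ s).HasWinningStrategy .eloise .start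

/-! ## Approximants -/

/-- Auxiliary structural recursion for approximants: `k` tells what to put in
place of a claim symbol.  Label symbols are deleted (while updating the
environment), and polarity is tracked through negations. -/
def approxCore {V : Vocab}
    (k : (ℕ → Option (SCLFormula V)) → Bool → ℕ → SCLFormula V) :
    (ℕ → Option (SCLFormula V)) → Bool → SCLFormula V → SCLFormula V
  | _, _, .bot => .bot
  | _, _, .eq x y => .eq x y
  | _, _, .rel R a => .rel R a
  | e, b, .claim L => k e b L
  | e, b, .not φ => .not (approxCore k e (!b) φ)
  | e, b, .and φ ψ => .and (approxCore k e b φ) (approxCore k e b ψ)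
  | e, b, .or φ ψ => .or (approxCore k e b φ) (approxCore k e b ψ)
  | e, b, .ex x φ => .ex x (approxCore k e b φ)
  | e, b, .all x φ => .all x (approxCore k e b φ)
  | e, b, .lab L φ => approxCore k (Function.update e L (some (.lab L φ))) b φ

/-- `approx n e b φ` unfolds each claim symbol of `φ` (in environment `e`,
under polarity `b`) through `n` jumps to reference formulas; claim symbols
reached with exhausted budget (or with no reference formula) are replaced by
`⊥` at positive occurrences and `⊤` (i.e. `¬⊥`) at negative occurrences, and
all label symbols are deleted. -/
def approx {V : Vocab} : ℕ → (ℕ → Option (SCLFormula V)) → Bool → SCLFormula V → SCLFormula V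
  | 0 => approxCore fun _ b _ => if b then .bot else .not .bot
  | n + 1 => approxCore fun e b L =>
      match e L with
      | some χ => approx n e b χ
      | none => if b then .bot else .not .bot

/-- The `n`-th approximant `Φⁿ_φ` of `φ`: the first-order formula obtained
from the `n`-th unfolding of `φ` by deleting all label symbols and replacing
positive claim occurrences by `⊥` and negative ones by `⊤`. -/
def approximant {V : Vocab} (φ : SCLFormula V) (n : ℕ) : SCLFormula V :=
  approx n (fun _ => none) true φ
/-! ### Auxiliary generic lemmas about game arenas -/

namespace GameArena

variable {P : Type u} (A : GameArena P)

/-- Some edge-successor of `u`, if one exists. -/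
noncomputable def pick [Nonempty P] (u : P) : P :=
  letI := Classical.propDecidable
  if h : ∃ x, A.edge u x then Classical.choose h else Classical.arbitrary (α := P)

lemma pick_edge [Nonempty P] {u : P} (hex : ∃ x, A.edge u x) :
    A.edge u (A.pick u) := by
  rw [pick, dif_pos hex]; exact Classical.choose_spec hex

/-- A default legal strategy. -/
noncomputable def dflt [Nonempty P] : List P → P :=
  fun q => A.pick (q.getLast?.getD (Classical.arbitrary (α := P)))

lemma dflt_legal [Nonempty P] (pl : Player) (v : P) : A.LegalFor pl v A.dflt := by
  intro w u hw hlast hturn hex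
  show A.edge u (A.pick _)
  rw [hlast]
  exact A.pick_edge hex

lemma head_eq_of_head? {q : List P} {w : P} (h : q.head? = some w) :
    q = w :: q.tail := by
  cases q with
  | nil => simp at h
  | cons a t => simp_all

lemma getLast?_cons_of_ne_nil {a : P} {l : List P} (h : l ≠ []) :
    (a :: l).getLast? = l.getLast? := by
  cases l with
  | nil => exact absurd rfl h
  | cons b t => exact List.getLast?_cons_cons

variable {A}

lemma WinningStrategy.legal {pl : Player} {v : P} {σ : List P → P}
    (h : A.WinningStrategy pl v σ) : A.LegalFor pl v σ := h.1

/-- Shifting a winning strategy across one move. -/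
lemma winning_shift {v w : P} {σ : List P → P}
    (hni : ∀ (u : P) (f : ℕ → P), ¬ A.IsInfPlay u f)
    (hσ : A.WinningStrategy .eloise v σ)
    (hvw : A.edge v w)
    (hsel : A.turn v = .eloise → w = σ [v]) :
    A.WinningStrategy .eloise w (fun q => σ (v :: q)) := by
  refine ⟨?_, ?_, fun f hf _ => hni w f hf⟩
  · intro q u hq hlast hturn hex
    have hq' : A.IsWalkFrom v (v :: q) := by
      refine ⟨rfl, List.isChain_cons.2 ⟨?_, hq.2⟩⟩
      intro y hy
      rw [hq.1] at hy
      cases hy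
      exact hvw
    have hqn : q ≠ [] := by
      intro h; rw [h] at hq; simp [IsWalkFrom] at hq
    exact hσ.1 (v :: q) u hq' (by rw [getLast?_cons_of_ne_nil hqn]; exact hlast) hturn hex
  · intro p hp hf
    have hpn : p ≠ [] := by
      intro h; rw [h] at hp; simp [IsFinitePlay, IsWalkFrom] at hp
    have hplay : A.IsFinitePlay v (v :: p) := by
      refine ⟨⟨rfl, List.isChain_cons.2 ⟨?_, hp.1.2⟩⟩, ?_⟩
      · intro y hy
        rw [hp.1.1] at hy; cases hy; exact hvw
      · intro u hu
        rw [getLast?_cons_of_ne_nil hpn] at hu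
        exact hp.2 u hu
    have hfol : A.FollowsFin .eloise σ (v :: p) := by
      intro q u x hpre hlast hturn
      cases q with
      | nil => simp at hlast
      | cons a q' =>
        obtain ⟨t, ht⟩ := hpre
        have hav : a = v := by
          have := congrArg List.head? ht
          simpa using this
        cases q' with
        | nil =>
          -- x is the first element of p
          have hu : a = u := by simpa using hlast
          have hx : x = w := by
            have ht' := congrArg List.tail ht
            simp at ht'
            have hx2 : p.head? = some x := by rw [← ht']; simp
            rw [hp.1.1] at hx2
            exact (Option.some_injective _ hx2).symm
          rw [hav, hx]
          exact hsel (by rw [← hav, hu]; exact hturn)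
        | cons b q'' =>
          have hpre' : ((b :: q'') ++ [x]) <+: p := by
            refine ⟨t, ?_⟩
            have := congrArg List.tail ht
            simpa using this
          have hlast' : (b :: q'').getLast? = some u := by
            rw [getLast?_cons_of_ne_nil (by simp)] at hlast
            exact hlast
          rw [hav]
          exact hf (b :: q'') u x hpre' hlast' hturn
    obtain ⟨u, hu, hwin⟩ := hσ.2.1 (v :: p) hplay hfol
    refine ⟨u, ?_, hwin⟩
    rw [getLast?_cons_of_ne_nil hpn] at hu
    exact hu

end GameArena
namespace GameArena

variable {P : Type u} {A : GameArena P}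

/-- Glue together a first move `w₀` with continuation strategies `τ`. -/
def glue (w₀ : P) (τ : P → List P → P) : List P → P := fun q =>
  match q with
  | _ :: w :: rest => τ w (w :: rest)
  | _ => w₀

lemma winning_glue [Nonempty P] {v w₀ : P} {τ : P → List P → P}
    (hni : ∀ (u : P) (f : ℕ → P), ¬ A.IsInfPlay u f)
    (hne : ∃ x, A.edge v x)
    (hw0 : A.turn v = .eloise → A.edge v w₀)
    (hleg : ∀ w, A.edge v w → A.LegalFor .eloise w (τ w))
    (hwin : ∀ w, A.edge v w → (A.turn v = .eloise → w = w₀) →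
      A.WinningStrategy .eloise w (τ w)) :
    A.WinningStrategy .eloise v (glue w₀ τ) := by
  refine ⟨?_, ?_, fun f hf _ => hni v f hf⟩
  · intro q u hq hlast hturn hex
    obtain ⟨a, rest, rfl⟩ : ∃ a rest, q = a :: rest := by
      cases q with
      | nil => simp [IsWalkFrom] at hq
      | cons a rest => exact ⟨a, rest, rfl⟩
    have hav : a = v := by simpa using hq.1
    subst hav
    cases rest with
    | nil =>
      have hu : a = u := by simpa using hlast
      subst hu
      exact hw0 hturn
    | cons w rest' =>
      have hvw : A.edge a w := (List.isChain_cons.1 hq.2).1 w rfl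
      have hwalk : A.IsWalkFrom w (w :: rest') := ⟨rfl, (List.isChain_cons.1 hq.2).2⟩
      have hlast' : (w :: rest').getLast? = some u := by
        rw [getLast?_cons_of_ne_nil (by simp)] at hlast
        exact hlast
      exact hleg w hvw (w :: rest') u hwalk hlast' hturn hex
  · intro p hp hf
    obtain ⟨a, rest, rfl⟩ : ∃ a rest, p = a :: rest := by
      cases p with
      | nil => simp [IsFinitePlay, IsWalkFrom] at hp
      | cons a rest => exact ⟨a, rest, rfl⟩
    have hav : a = v := by simpa using hp.1.1
    subst hav
    cases rest with
    | nil =>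
      exfalso
      obtain ⟨x, hx⟩ := hne
      exact hp.2 a (by simp) x hx
    | cons w rest' =>
      have hvw : A.edge a w := (List.isChain_cons.1 hp.1.2).1 w rfl
      have hsel : A.turn a = .eloise → w = w₀ := by
        intro hturn
        exact hf [a] a w ⟨rest', rfl⟩ rfl hturn
      have hwinw := hwin w hvw hsel
      have hplay : A.IsFinitePlay w (w :: rest') := by
        refine ⟨⟨rfl, (List.isChain_cons.1 hp.1.2).2⟩, ?_⟩
        intro u hu
        refine hp.2 u ?_
        rw [getLast?_cons_of_ne_nil (by simp)]
        exact hu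
      have hfol : A.FollowsFin .eloise (τ w) (w :: rest') := by
        intro q u x hpre hlast hturn
        obtain ⟨b, qt, rfl⟩ : ∃ b qt, q = b :: qt := by
          cases q with
          | nil => simp at hlast
          | cons b qt => exact ⟨b, qt, rfl⟩
        obtain ⟨t, ht⟩ := hpre
        have hbw : b = w := by simpa using congrArg List.head? ht
        subst hbw
        have hpre' : ((a :: b :: qt) ++ [x]) <+: (a :: b :: rest') := by
          refine ⟨t, ?_⟩
          simpa using ht
        have hlast' : (a :: b :: qt).getLast? = some u := by
          rw [getLast?_cons_of_ne_nil (by simp)]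
          exact hlast
        have := hf (a :: b :: qt) u x hpre' hlast' hturn
        simpa [glue] using this
      obtain ⟨u, hu, hwin'⟩ := hwinw.2.1 (w :: rest') hplay hfol
      refine ⟨u, ?_, hwin'⟩
      rw [getLast?_cons_of_ne_nil (by simp)]
      exact hu

end GameArena
namespace GameArena

variable {P : Type u} {A : GameArena P}

lemma walk_eq_singleton_of_deadEnd {v : P} (hd : A.DeadEnd v) {q : List P}
    (hq : A.IsWalkFrom v q) : q = [v] := by
  cases q with
  | nil => simp [IsWalkFrom] at hq
  | cons a rest =>
    have hav : a = v := by simpa using hq.1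
    subst hav
    cases rest with
    | nil => rfl
    | cons b t =>
      exact absurd ((List.isChain_cons.1 hq.2).1 b rfl) (hd b)

lemma hasWin_deadEnd [Nonempty P] {v : P}
    (hni : ∀ (u : P) (f : ℕ → P), ¬ A.IsInfPlay u f)
    (hd : A.DeadEnd v) :
    A.HasWinningStrategy .eloise v ↔ A.win v .eloise := by
  constructor
  · rintro ⟨σ, hσ⟩
    have hplay : A.IsFinitePlay v [v] := by
      refine ⟨⟨rfl, List.isChain_singleton _⟩, ?_⟩
      intro u hu
      have : u = v := by simpa using hu.symm
      subst this; exact hd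
    have hfol : A.FollowsFin .eloise σ [v] := by
      intro q u x hpre hlast hturn
      exfalso
      obtain ⟨t, ht⟩ := hpre
      have := congrArg List.length ht
      simp at this
      have hq : q = [] := by
        rcases q with _ | ⟨a, qt⟩
        · rfl
        · simp at this; omega
      rw [hq] at hlast; simp at hlast
    obtain ⟨u, hu, hwin⟩ := hσ.2.1 [v] hplay hfol
    have : u = v := by simpa using hu.symm
    subst this; exact hwin
  · intro hw
    refine ⟨fun _ => v, ?_, ?_, fun f hf _ => hni v f hf⟩
    · intro q u hq hlast hturn hex
      have := walk_eq_singleton_of_deadEnd hd hq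
      subst this
      have : v = u := by simpa using hlast
      subst this
      exact absurd hex (by simpa [DeadEnd] using hd)
    · intro p hp _
      have := walk_eq_singleton_of_deadEnd hd hp.1
      subst this
      exact ⟨v, by simp, hw⟩

lemma hasWin_eloise [Nonempty P] {v : P}
    (hni : ∀ (u : P) (f : ℕ → P), ¬ A.IsInfPlay u f)
    (ht : A.turn v = .eloise) (hne : ∃ x, A.edge v x) :
    A.HasWinningStrategy .eloise v ↔
      ∃ w, A.edge v w ∧ A.HasWinningStrategy .eloise w := by
  constructor
  · rintro ⟨σ, hσ⟩
    have hvw : A.edge v (σ [v]) := hσ.1 [v] v ⟨rfl, List.isChain_singleton _⟩ (by simp) ht hne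
    exact ⟨σ [v], hvw, _, winning_shift hni hσ hvw (fun _ => rfl)⟩
  · rintro ⟨w, hvw, hw⟩
    classical
    refine ⟨glue w (fun u => if h : A.HasWinningStrategy .eloise u then h.choose else A.dflt),
      winning_glue hni hne (fun _ => hvw) ?_ ?_⟩
    · intro u hu
      by_cases h : A.HasWinningStrategy .eloise u
      · rw [dif_pos h]; exact h.choose_spec.1
      · rw [dif_neg h]; exact A.dflt_legal _ _
    · intro u hu hsel
      have huw : u = w := hsel ht
      subst huw
      rw [dif_pos hw]
      exact hw.choose_spec

lemma hasWin_abelard [Nonempty P] {v : P}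
    (hni : ∀ (u : P) (f : ℕ → P), ¬ A.IsInfPlay u f)
    (ht : A.turn v = .abelard) (hne : ∃ x, A.edge v x) :
    A.HasWinningStrategy .eloise v ↔
      ∀ w, A.edge v w → A.HasWinningStrategy .eloise w := by
  constructor
  · rintro ⟨σ, hσ⟩ w hvw
    refine ⟨_, winning_shift hni hσ hvw ?_⟩
    intro h; rw [ht] at h; exact Player.noConfusion h
  · intro hAll
    classical
    refine ⟨glue (Classical.arbitrary (α := P))
      (fun u => if h : A.HasWinningStrategy .eloise u then h.choose else A.dflt),
      winning_glue hni hne (fun h => by rw [ht] at h; exact Player.noConfusion h) ?_ ?_⟩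
    · intro u hu
      by_cases h : A.HasWinningStrategy .eloise u
      · rw [dif_pos h]; exact h.choose_spec.1
      · rw [dif_neg h]; exact A.dflt_legal _ _
    · intro u hu _
      have h := hAll u hu
      rw [dif_pos h]
      exact h.choose_spec

lemma hasWin_forced [Nonempty P] {v w : P}
    (hni : ∀ (u : P) (f : ℕ → P), ¬ A.IsInfPlay u f)
    (ht : A.turn v = .eloise) (hvw : A.edge v w)
    (huniq : ∀ x, A.edge v x → x = w) :
    A.HasWinningStrategy .eloise v ↔ A.HasWinningStrategy .eloise w := by
  rw [hasWin_eloise hni ht ⟨w, hvw⟩]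
  constructor
  · rintro ⟨x, hx, h⟩
    rwa [huniq x hx] at h
  · intro h
    exact ⟨w, hvw, h⟩

end GameArena
/-! ### No infinite plays in the bounded game -/

def SCLFormula.fsize {V : Vocab} : SCLFormula V → ℕ
  | .bot => 1
  | .eq _ _ => 1
  | .rel _ _ => 1
  | .claim _ => 1
  | .not φ => fsize φ + 1
  | .and φ ψ => fsize φ + fsize ψ + 1
  | .or φ ψ => fsize φ + fsize ψ + 1
  | .ex _ φ => fsize φ + 1
  | .all _ φ => fsize φ + 1
  | .lab _ φ => fsize φ + 1

def bMeasure {V : Vocab} {D : Type u} (x : SCLPos V D × ℕ) : ℕ × ℕ :=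
  (x.2, x.1.form.fsize)

lemma bstep_decr {V : Vocab} {M : Struct.{u} V} {x y : SCLPos V M.Dom × ℕ}
    (h : BStep M x y) :
    Prod.Lex (· < ·) (· < ·) (bMeasure y) (bMeasure x) := by
  cases h with
  | claimStep L e s b χ n h => exact Prod.Lex.left _ _ (Nat.lt_succ_self n)
  | neg φ e s b n => exact Prod.Lex.right _ (by simp [bMeasure, SCLFormula.fsize])
  | andLeft φ ψ e s b n =>
    exact Prod.Lex.right _ (by simp [bMeasure, SCLFormula.fsize])
  | andRight φ ψ e s b n =>
    exact Prod.Lex.right _ (by simp [bMeasure, SCLFormula.fsize])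
  | orLeft φ ψ e s b n =>
    exact Prod.Lex.right _ (by simp [bMeasure, SCLFormula.fsize])
  | orRight φ ψ e s b n =>
    exact Prod.Lex.right _ (by simp [bMeasure, SCLFormula.fsize])
  | exStep x' φ e s b n a =>
    exact Prod.Lex.right _ (by simp [bMeasure, SCLFormula.fsize])
  | allStep x' φ e s b n a =>
    exact Prod.Lex.right _ (by simp [bMeasure, SCLFormula.fsize])
  | labStep L φ e s b n =>
    exact Prod.Lex.right _ (by simp [bMeasure, SCLFormula.fsize])

lemma no_descending {α : Type*} {r : α → α → Prop} (wf : WellFounded r)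
    (g : ℕ → α) (h : ∀ n, r (g (n + 1)) (g n)) : False := by
  have H : ∀ a, Acc r a → ∀ g : ℕ → α, g 0 = a → (∀ n, r (g (n + 1)) (g n)) → False := by
    intro a ha
    induction ha with
    | intro x hx ih =>
      intro g hg hsteps
      exact ih (g 1) (hg ▸ hsteps 0) (fun n => g (n + 1)) rfl (fun n => hsteps (n + 1))
  exact H (g 0) (wf.apply _) g rfl h

lemma noInfB {V : Vocab} (M : Struct.{u} V) :
    ∀ (v : SCLPos V M.Dom × ℕ) (f : ℕ → SCLPos V M.Dom × ℕ),
      ¬ (gameB M).IsInfPlay v f := by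
  rintro v f ⟨-, hstep⟩
  have wf : WellFounded (Prod.Lex (· < ·) (· < ·) : ℕ × ℕ → ℕ × ℕ → Prop) :=
    WellFounded.prod_lex (Nat.lt_wfRel.wf) (Nat.lt_wfRel.wf)
  exact no_descending wf (fun n => bMeasure (f n)) (fun n => bstep_decr (hstep n))
/-! ### Unfolding lemmas for `approx` -/

section ApproxLemmas

variable {V : Vocab} (n : ℕ) (e : ℕ → Option (SCLFormula V)) (b : Bool)

lemma approx_bot : approx n e b (.bot : SCLFormula V) = .bot := by cases n <;> rfl

lemma approx_eq (x y : ℕ) : approx n e b (.eq x y : SCLFormula V) = .eq x y := by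
  cases n <;> rfl

lemma approx_rel (R : V.Rel) (a : Fin (V.arity R) → ℕ) :
    approx n e b (.rel R a) = .rel R a := by cases n <;> rfl

lemma approx_not (φ : SCLFormula V) :
    approx n e b (.not φ) = .not (approx n e (!b) φ) := by cases n <;> rfl

lemma approx_and (φ ψ : SCLFormula V) :
    approx n e b (.and φ ψ) = .and (approx n e b φ) (approx n e b ψ) := by
  cases n <;> rfl

lemma approx_or (φ ψ : SCLFormula V) :
    approx n e b (.or φ ψ) = .or (approx n e b φ) (approx n e b ψ) := by
  cases n <;> rfl

lemma approx_ex (x : ℕ) (φ : SCLFormula V) :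
    approx n e b (.ex x φ) = .ex x (approx n e b φ) := by cases n <;> rfl

lemma approx_all (x : ℕ) (φ : SCLFormula V) :
    approx n e b (.all x φ) = .all x (approx n e b φ) := by cases n <;> rfl

lemma approx_lab (L : ℕ) (φ : SCLFormula V) :
    approx n e b (.lab L φ) =
      approx n (Function.update e L (some (.lab L φ))) b φ := by cases n <;> rfl

lemma approx_claim_zero (L : ℕ) :
    approx 0 e b (.claim L : SCLFormula V) = if b then .bot else .not .bot := rfl

lemma approx_claim_some (L : ℕ) {χ : SCLFormula V} (h : e L = some χ) :
    approx (n + 1) e b (.claim L) = approx n e b χ := by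
  show (match e L with
    | some χ => approx n e b χ
    | none => if b then .bot else .not .bot) = approx n e b χ
  rw [h]

lemma approx_claim_none (L : ℕ) (h : e L = none) :
    approx (n + 1) e b (.claim L) = if b then .bot else .not .bot := by
  show (match e L with
    | some χ => approx n e b χ
    | none => if b then .bot else .not .bot) = _
  rw [h]

end ApproxLemmas

/-! ### The key characterisation -/

section Key

variable {V : Vocab} (M : Struct.{u} V)

instance : Nonempty (SCLPos V M.Dom × ℕ) :=
  ⟨(⟨.bot, fun _ => none, fun _ => Classical.arbitrary (α := M.Dom), true⟩, 0)⟩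

theorem keyB : ∀ (n : ℕ) (φ : SCLFormula V) (e : ℕ → Option (SCLFormula V))
    (s : ℕ → M.Dom) (b : Bool),
    (gameB M).HasWinningStrategy .eloise (⟨φ, e, s, b⟩, n) ↔
      (FOSat M s (approx n e b φ) ↔ b = true) := by
  have hni := noInfB M
  -- the claim-symbol case, by induction on the clock
  suffices step : ∀ n : ℕ,
      (∀ (L : ℕ) (e : ℕ → Option (SCLFormula V)) (s : ℕ → M.Dom) (b : Bool),
        (gameB M).HasWinningStrategy .eloise (⟨.claim L, e, s, b⟩, n) ↔
          (FOSat M s (approx n e b (.claim L)) ↔ b = true)) →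
      ∀ (φ : SCLFormula V) (e : ℕ → Option (SCLFormula V)) (s : ℕ → M.Dom) (b : Bool),
        (gameB M).HasWinningStrategy .eloise (⟨φ, e, s, b⟩, n) ↔
          (FOSat M s (approx n e b φ) ↔ b = true) by
    intro n
    induction n with
    | zero =>
      refine step 0 ?_
      intro L e s b
      have hd : (gameB M).DeadEnd (⟨.claim L, e, s, b⟩, 0) := by
        intro x hx
        cases hx
      rw [GameArena.hasWin_deadEnd hni hd]
      show (SCLFormula.IsFOAtom _ ∧ _) ↔ _
      cases b <;> simp [SCLFormula.IsFOAtom, approx_claim_zero, FOSat]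
    | succ n ih =>
      refine step (n + 1) ?_
      intro L e s b
      cases he : e L with
      | none =>
        have hd : (gameB M).DeadEnd (⟨.claim L, e, s, b⟩, n + 1) := by
          intro x hx
          cases hx with
          | claimStep _ _ _ _ χ _ h => rw [he] at h; cases h
        rw [GameArena.hasWin_deadEnd hni hd]
        show (SCLFormula.IsFOAtom _ ∧ _) ↔ _
        cases b <;> simp [SCLFormula.IsFOAtom, approx_claim_none, he, FOSat]
      | some χ =>
        have hturn : (gameB M).turn (⟨.claim L, e, s, b⟩, n + 1) = .eloise := by
          cases b <;> rfl
        have hedge : (gameB M).edge (⟨.claim L, e, s, b⟩, n + 1) (⟨χ, e, s, b⟩, n) :=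
          BStep.claimStep L e s b χ n he
        have huniq : ∀ x, (gameB M).edge (⟨.claim L, e, s, b⟩, n + 1) x →
            x = (⟨χ, e, s, b⟩, n) := by
          intro x hx
          cases hx with
          | claimStep _ _ _ _ χ' _ h =>
            rw [he] at h
            cases h
            rfl
        rw [GameArena.hasWin_forced hni hturn hedge huniq, ih χ e s b,
          approx_claim_some n e b L he]
  -- the main structural induction
  intro n hclaim φ
  induction φ with
  | bot =>
    intro e s b
    have hd : (gameB M).DeadEnd (⟨.bot, e, s, b⟩, n) := fun x hx => by cases hx
    rw [GameArena.hasWin_deadEnd hni hd]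
    show (SCLFormula.IsFOAtom _ ∧ _) ↔ _
    simp [SCLFormula.IsFOAtom, atomSat, approx_bot, FOSat]
  | eq x y =>
    intro e s b
    have hd : (gameB M).DeadEnd (⟨.eq x y, e, s, b⟩, n) := fun x hx => by cases hx
    rw [GameArena.hasWin_deadEnd hni hd]
    show (SCLFormula.IsFOAtom _ ∧ _) ↔ _
    simp [SCLFormula.IsFOAtom, atomSat, approx_eq, FOSat]
  | rel R a =>
    intro e s b
    have hd : (gameB M).DeadEnd (⟨.rel R a, e, s, b⟩, n) := fun x hx => by cases hx
    rw [GameArena.hasWin_deadEnd hni hd]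
    show (SCLFormula.IsFOAtom _ ∧ _) ↔ _
    simp [SCLFormula.IsFOAtom, atomSat, approx_rel, FOSat]
  | claim L => exact hclaim L
  | not φ ihφ =>
    intro e s b
    have hturn : (gameB M).turn (⟨.not φ, e, s, b⟩, n) = .eloise := by cases b <;> rfl
    have hedge : (gameB M).edge (⟨.not φ, e, s, b⟩, n) (⟨φ, e, s, !b⟩, n) :=
      BStep.neg φ e s b n
    have huniq : ∀ x, (gameB M).edge (⟨.not φ, e, s, b⟩, n) x → x = (⟨φ, e, s, !b⟩, n) := by
      intro x hx
      cases hx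
      rfl
    rw [GameArena.hasWin_forced hni hturn hedge huniq, ihφ e s (!b)]
    cases b <;> simp [approx_not, FOSat]
  | and φ ψ ihφ ihψ =>
    intro e s b
    cases b with
    | true =>
      rw [GameArena.hasWin_abelard hni (by rfl) ⟨_, BStep.andLeft φ ψ e s true n⟩]
      have h2 : (∀ w, (gameB M).edge (⟨.and φ ψ, e, s, true⟩, n) w →
            (gameB M).HasWinningStrategy .eloise w) ↔
          ((gameB M).HasWinningStrategy .eloise (⟨φ, e, s, true⟩, n) ∧
            (gameB M).HasWinningStrategy .eloise (⟨ψ, e, s, true⟩, n)) := by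
        constructor
        · intro h
          exact ⟨h _ (BStep.andLeft φ ψ e s true n), h _ (BStep.andRight φ ψ e s true n)⟩
        · rintro ⟨h1, h2⟩ w hw
          cases hw
          · exact h1
          · exact h2
      rw [h2, ihφ e s true, ihψ e s true]
      simp [approx_and, FOSat]
    | false =>
      rw [GameArena.hasWin_eloise hni (by rfl) ⟨_, BStep.andLeft φ ψ e s false n⟩]
      have h2 : (∃ w, (gameB M).edge (⟨.and φ ψ, e, s, false⟩, n) w ∧
            (gameB M).HasWinningStrategy .eloise w) ↔
          ((gameB M).HasWinningStrategy .eloise (⟨φ, e, s, false⟩, n) ∨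
            (gameB M).HasWinningStrategy .eloise (⟨ψ, e, s, false⟩, n)) := by
        constructor
        · rintro ⟨w, hw, h⟩
          cases hw
          · exact Or.inl h
          · exact Or.inr h
        · rintro (h | h)
          · exact ⟨_, BStep.andLeft φ ψ e s false n, h⟩
          · exact ⟨_, BStep.andRight φ ψ e s false n, h⟩
      rw [h2, ihφ e s false, ihψ e s false]
      simp [approx_and, FOSat]
      tauto
  | or φ ψ ihφ ihψ =>
    intro e s b
    cases b with
    | true =>
      rw [GameArena.hasWin_eloise hni (by rfl) ⟨_, BStep.orLeft φ ψ e s true n⟩]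
      have h2 : (∃ w, (gameB M).edge (⟨.or φ ψ, e, s, true⟩, n) w ∧
            (gameB M).HasWinningStrategy .eloise w) ↔
          ((gameB M).HasWinningStrategy .eloise (⟨φ, e, s, true⟩, n) ∨
            (gameB M).HasWinningStrategy .eloise (⟨ψ, e, s, true⟩, n)) := by
        constructor
        · rintro ⟨w, hw, h⟩
          cases hw
          · exact Or.inl h
          · exact Or.inr h
        · rintro (h | h)
          · exact ⟨_, BStep.orLeft φ ψ e s true n, h⟩
          · exact ⟨_, BStep.orRight φ ψ e s true n, h⟩
      rw [h2, ihφ e s true, ihψ e s true]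
      simp [approx_or, FOSat]
    | false =>
      rw [GameArena.hasWin_abelard hni (by rfl) ⟨_, BStep.orLeft φ ψ e s false n⟩]
      have h2 : (∀ w, (gameB M).edge (⟨.or φ ψ, e, s, false⟩, n) w →
            (gameB M).HasWinningStrategy .eloise w) ↔
          ((gameB M).HasWinningStrategy .eloise (⟨φ, e, s, false⟩, n) ∧
            (gameB M).HasWinningStrategy .eloise (⟨ψ, e, s, false⟩, n)) := by
        constructor
        · intro h
          exact ⟨h _ (BStep.orLeft φ ψ e s false n), h _ (BStep.orRight φ ψ e s false n)⟩
        · rintro ⟨h1, h2⟩ w hw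
          cases hw
          · exact h1
          · exact h2
      rw [h2, ihφ e s false, ihψ e s false]
      simp [approx_or, FOSat]
  | ex x φ ihφ =>
    intro e s b
    obtain ⟨a0⟩ := M.dom_nonempty
    cases b with
    | true =>
      rw [GameArena.hasWin_eloise hni (by rfl) ⟨_, BStep.exStep x φ e s true n a0⟩]
      have h2 : (∃ w, (gameB M).edge (⟨.ex x φ, e, s, true⟩, n) w ∧
            (gameB M).HasWinningStrategy .eloise w) ↔
          (∃ a : M.Dom, (gameB M).HasWinningStrategy .eloise
            (⟨φ, e, Function.update s x a, true⟩, n)) := by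
        constructor
        · rintro ⟨w, hw, h⟩
          cases hw with
          | exStep _ _ _ _ _ _ a => exact ⟨a, h⟩
        · rintro ⟨a, h⟩
          exact ⟨_, BStep.exStep x φ e s true n a, h⟩
      rw [h2]
      simp only [ihφ]
      simp [approx_ex, FOSat]
    | false =>
      rw [GameArena.hasWin_abelard hni (by rfl) ⟨_, BStep.exStep x φ e s false n a0⟩]
      have h2 : (∀ w, (gameB M).edge (⟨.ex x φ, e, s, false⟩, n) w →
            (gameB M).HasWinningStrategy .eloise w) ↔
          (∀ a : M.Dom, (gameB M).HasWinningStrategy .eloise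
            (⟨φ, e, Function.update s x a, false⟩, n)) := by
        constructor
        · intro h a
          exact h _ (BStep.exStep x φ e s false n a)
        · intro h w hw
          cases hw with
          | exStep _ _ _ _ _ _ a => exact h a
      rw [h2]
      simp only [ihφ]
      simp [approx_ex, FOSat]
  | all x φ ihφ =>
    intro e s b
    obtain ⟨a0⟩ := M.dom_nonempty
    cases b with
    | true =>
      rw [GameArena.hasWin_abelard hni (by rfl) ⟨_, BStep.allStep x φ e s true n a0⟩]
      have h2 : (∀ w, (gameB M).edge (⟨.all x φ, e, s, true⟩, n) w →
            (gameB M).HasWinningStrategy .eloise w) ↔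
          (∀ a : M.Dom, (gameB M).HasWinningStrategy .eloise
            (⟨φ, e, Function.update s x a, true⟩, n)) := by
        constructor
        · intro h a
          exact h _ (BStep.allStep x φ e s true n a)
        · intro h w hw
          cases hw with
          | allStep _ _ _ _ _ _ a => exact h a
      rw [h2]
      simp only [ihφ]
      simp [approx_all, FOSat]
    | false =>
      rw [GameArena.hasWin_eloise hni (by rfl) ⟨_, BStep.allStep x φ e s false n a0⟩]
      have h2 : (∃ w, (gameB M).edge (⟨.all x φ, e, s, false⟩, n) w ∧
            (gameB M).HasWinningStrategy .eloise w) ↔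
          (∃ a : M.Dom, (gameB M).HasWinningStrategy .eloise
            (⟨φ, e, Function.update s x a, false⟩, n)) := by
        constructor
        · rintro ⟨w, hw, h⟩
          cases hw with
          | allStep _ _ _ _ _ _ a => exact ⟨a, h⟩
        · rintro ⟨a, h⟩
          exact ⟨_, BStep.allStep x φ e s false n a, h⟩
      rw [h2]
      simp only [ihφ]
      simp [approx_all, FOSat]
  | lab L φ ihφ =>
    intro e s b
    have hturn : (gameB M).turn (⟨.lab L φ, e, s, b⟩, n) = .eloise := by cases b <;> rfl
    have hedge : (gameB M).edge (⟨.lab L φ, e, s, b⟩, n)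
        (⟨φ, Function.update e L (some (.lab L φ)), s, b⟩, n) :=
      BStep.labStep L φ e s b n
    have huniq : ∀ x, (gameB M).edge (⟨.lab L φ, e, s, b⟩, n) x →
        x = (⟨φ, Function.update e L (some (.lab L φ)), s, b⟩, n) := by
      intro x hx
      cases hx
      rfl
    rw [GameArena.hasWin_forced hni hturn hedge huniq,
      ihφ (Function.update e L (some (.lab L φ))) s b, approx_lab]

end Key

/-- Eloise has a winning strategy in the `n`-bounded
evaluation game `G_n(𝔄,s,φ)` iff `𝔄,s ⊨ Φⁿ_φ` in first-order logic
(equivalently, iff she wins the standard FO evaluation game on the `n`-th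
approximant). -/
theorem bounded_game_iff_approximant {V : Vocab} (φ : SCLFormula V)
    (M : Struct.{u} V) (s : ℕ → M.Dom) (n : ℕ) :
    (gameB M).HasWinningStrategy .eloise (initPos φ s, n) ↔
      FOSat M s (approximant φ n) := by
  have h := keyB M n φ (fun _ => none) s true
  simpa [initPos, approximant] using h
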